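/- Let f ∈ C¹(ℝ) ∩ L^p(ℝ) with f' ∈ L^p(ℝ) and f' Hölder continuous of order 1/p, where 1 ≤ p < ∞. Then ‖f'‖_{L^p(ℝ)}^p = lim_{λ→∞} λ^p 𝓛²({(x,t) ∈ ℝ × (0,∞) : |f(x+t) − f(x)| / t^{1+1/p} > λ}). -/

import Mathlib

open MeasureTheory Filter Set
open scoped ENNReal

noncomputable section

/-- Taylor-type bound from the Hölder condition on the derivative. -/
lemma bsy_taylor (p M : ℝ) (hp : 1 ≤ p) (hM : 0 ≤ M) (f : ℝ → ℝ) (hf : ContDiff ℝ 1 f)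
    (hHolder : ∀ x y : ℝ, |deriv f x - deriv f y| ≤ M * |x - y| ^ (1 / p))
    (x t : ℝ) (ht : 0 < t) :
    |f (x + t) - f x - deriv f x * t| ≤ M * t ^ (1 / p) * t := by
  have hp0 : (0 : ℝ) < p := by linarith
  have hcont : Continuous (deriv f) := hf.continuous_deriv le_rfl
  have hint : IntervalIntegrable (deriv f) volume x (x + t) :=
    hcont.intervalIntegrable _ _
  have h1 : ∫ y in x..(x + t), deriv f y = f (x + t) - f x :=
    intervalIntegral.integral_deriv_eq_sub (fun y _ => (hf.differentiable one_ne_zero y)) hint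
  have h2 : ∫ y in x..(x + t), (deriv f y - deriv f x) = f (x + t) - f x - deriv f x * t := by
    rw [intervalIntegral.integral_sub hint intervalIntegrable_const, h1,
      intervalIntegral.integral_const]
    simp
    ring
  have h3 : ∀ y ∈ Set.uIoc x (x + t), ‖deriv f y - deriv f x‖ ≤ M * t ^ (1 / p) := by
    intro y hy
    rw [Set.uIoc_of_le (by linarith : x ≤ x + t)] at hy
    refine (hHolder y x).trans ?_
    have habs : |y - x| ≤ t := by
      rw [abs_of_pos (by linarith [hy.1] : 0 < y - x)]
      linarith [hy.2]
    exact mul_le_mul_of_nonneg_left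
      (Real.rpow_le_rpow (abs_nonneg _) habs (by positivity)) hM
  have h4 := intervalIntegral.norm_integral_le_of_norm_le_const h3
  rw [h2] at h4
  simpa [Real.norm_eq_abs, abs_of_pos ht] using h4

theorem bsy_limit_formula_one_dim
    (p : ℝ) (hp : 1 ≤ p)
    (f : ℝ → ℝ) (hf : ContDiff ℝ 1 f)
    (hfp : MemLp f (ENNReal.ofReal p) volume)
    (hf'p : MemLp (deriv f) (ENNReal.ofReal p) volume)
    (M : ℝ) (hHolder : ∀ x y : ℝ, |deriv f x - deriv f y| ≤ M * |x - y| ^ (1 / p)) :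
    Tendsto (fun l : ℝ => ENNReal.ofReal (l ^ p) *
        (volume.prod (volume.restrict (Set.Ioi (0 : ℝ))))
          {q : ℝ × ℝ | 0 < q.2 ∧ l * q.2 ^ (1 + 1 / p) < |f (q.1 + q.2) - f q.1|})
      atTop (nhds (∫⁻ x, ENNReal.ofReal (|deriv f x| ^ p))) := by
  have hp0 : (0 : ℝ) < p := by linarith
  have hp0' : p ≠ 0 := ne_of_gt hp0
  have hM : 0 ≤ M := by
    have h := hHolder 1 0
    simp [Real.one_rpow] at h
    linarith [abs_nonneg (deriv f 1 - deriv f 0)]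
  set g := deriv f with hg
  set I := ∫⁻ x, ENNReal.ofReal (|g x| ^ p) with hIdef
  have hgm : Measurable g := (hf.continuous_deriv le_rfl).measurable
  have hfc : Continuous f := hf.continuous
  -- finiteness of I
  have hIne : I ≠ ⊤ := by
    have h1 : eLpNorm g (ENNReal.ofReal p) volume < ⊤ := hf'p.2
    rw [eLpNorm_eq_lintegral_rpow_enorm_toReal
      (by simp [ENNReal.ofReal_eq_zero]; linarith) (by simp)] at h1
    rw [ENNReal.toReal_ofReal hp0.le] at h1
    have h2 : (∫⁻ x, ‖g x‖ₑ ^ p) ≠ ⊤ := by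
      intro hcon
      rw [hcon, one_div, ENNReal.top_rpow_of_pos (by positivity : (0:ℝ) < p⁻¹)] at h1
      exact lt_irrefl _ h1
    have h3 : I = ∫⁻ x, ‖g x‖ₑ ^ p := by
      refine lintegral_congr fun x => ?_
      rw [← ENNReal.ofReal_rpow_of_nonneg (abs_nonneg _) hp0.le]
      congr 1
      simp [← Real.norm_eq_abs, ofReal_norm]
    rw [h3]
    exact h2
  -- measurability of the superlevel sets
  have hSm : ∀ l : ℝ, MeasurableSet
      {q : ℝ × ℝ | 0 < q.2 ∧ l * q.2 ^ (1 + 1 / p) < |f (q.1 + q.2) - f q.1|} := by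
    intro l
    have h1 : MeasurableSet {q : ℝ × ℝ | 0 < q.2} :=
      measurable_snd measurableSet_Ioi
    have h2 : MeasurableSet {q : ℝ × ℝ | l * q.2 ^ (1 + 1 / p) < |f (q.1 + q.2) - f q.1|} := by
      apply measurableSet_lt
      · exact measurable_const.mul (measurable_snd.pow_const _)
      · exact ((hfc.measurable.comp (measurable_fst.add measurable_snd)).sub
          (hfc.measurable.comp measurable_fst)).abs
    exact h1.inter h2
  -- key pointwise bound
  have key : ∀ x t : ℝ, 0 < t →
      abs (abs (f (x + t) - f x) - |g x| * t) ≤ M * t ^ (1 / p) * t := by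
    intro x t ht
    have h1 := bsy_taylor p M hp hM f hf hHolder x t ht
    have h2 : abs (abs (f (x + t) - f x) - abs (g x * t)) ≤ |f (x + t) - f x - g x * t| :=
      abs_abs_sub_abs_le_abs_sub _ _
    rw [abs_mul, abs_of_pos ht] at h2
    exact h2.trans h1
  -- auxiliary tendsto
  have tend_aux : ∀ c : ℝ, Tendsto (fun l : ℝ => ENNReal.ofReal ((l / (l + c)) ^ p) * I)
      atTop (nhds I) := by
    intro c
    have h1 : Tendsto (fun l : ℝ => l / (l + c)) atTop (nhds 1) := by
      have h0 : Tendsto (fun l : ℝ => 1 - c / (l + c)) atTop (nhds 1) := by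
        have hd := Tendsto.div_atTop
          (tendsto_const_nhds : Tendsto (fun _ : ℝ => c) atTop (nhds c))
          (tendsto_atTop_add_const_right atTop c tendsto_id)
        simpa using tendsto_const_nhds.sub hd
      apply h0.congr'
      filter_upwards [eventually_gt_atTop (|c| + 1)] with l hl
      have hlc : l + c ≠ 0 := by nlinarith [neg_abs_le c, le_abs_self c]
      field_simp
      ring
    have h2 : Tendsto (fun l : ℝ => (l / (l + c)) ^ p) atTop (nhds 1) := by
      have hc := (Real.continuousAt_rpow_const 1 p (Or.inl one_ne_zero)).tendsto
      have := hc.comp h1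
      simpa [Real.one_rpow, Function.comp_def] using this
    have h3 : Tendsto (fun l : ℝ => ENNReal.ofReal ((l / (l + c)) ^ p)) atTop (nhds 1) := by
      have := (ENNReal.continuous_ofReal.tendsto 1).comp h2
      simpa [Function.comp_def] using this
    have := ENNReal.Tendsto.mul_const (b := I) h3 (Or.inl one_ne_zero)
    simpa using this
  -- computation lemmas
  have hcompute : ∀ c : ℝ, 0 < c →
      (∫⁻ x, ENNReal.ofReal ((|g x| / c) ^ p)) = ENNReal.ofReal ((c ^ p)⁻¹) * I := by
    intro c hc
    rw [hIdef, ← lintegral_const_mul' _ _ ENNReal.ofReal_ne_top]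
    refine lintegral_congr fun x => ?_
    rw [Real.div_rpow (abs_nonneg _) hc.le, div_eq_mul_inv, mul_comm,
      ENNReal.ofReal_mul (by positivity)]
  have hmul : ∀ l c : ℝ, 0 ≤ l → 0 < c →
      ENNReal.ofReal (l ^ p) * ENNReal.ofReal ((c ^ p)⁻¹) = ENNReal.ofReal ((l / c) ^ p) := by
    intro l c hl hc
    rw [← ENNReal.ofReal_mul (by positivity), Real.div_rpow hl hc.le, div_eq_mul_inv]
  refine tendsto_of_tendsto_of_tendsto_of_le_of_le' (tend_aux M)
    (by simpa [← sub_eq_add_neg] using tend_aux (-M)) ?_ ?_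
  · -- lower bound
    filter_upwards [eventually_ge_atTop (max 1 (M + 1))] with l hl
    have hl1 : (1 : ℝ) ≤ l := le_trans (le_max_left _ _) hl
    have hlMpos : 0 < l + M := by linarith
    have hprod := Measure.prod_apply (μ := volume) (ν := volume.restrict (Ioi (0:ℝ))) (hSm l)
    have low_slice : ∀ x, ENNReal.ofReal ((|g x| / (l + M)) ^ p) ≤
        (volume.restrict (Ioi (0:ℝ)))
          (Prod.mk x ⁻¹' {q : ℝ × ℝ | 0 < q.2 ∧ l * q.2 ^ (1 + 1 / p) < |f (q.1 + q.2) - f q.1|}) := by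
      intro x
      rw [Measure.restrict_apply (measurable_prodMk_left (hSm l))]
      have hsub : Ioo 0 ((|g x| / (l + M)) ^ p) ⊆
          (Prod.mk x ⁻¹' {q : ℝ × ℝ | 0 < q.2 ∧ l * q.2 ^ (1 + 1 / p) < |f (q.1 + q.2) - f q.1|})
            ∩ Ioi 0 := by
        rintro t ⟨ht0, hta⟩
        refine ⟨⟨ht0, ?_⟩, ht0⟩
        have ha0 : 0 ≤ |g x| / (l + M) := div_nonneg (abs_nonneg _) hlMpos.le
        have htp : t ^ (1 / p) < |g x| / (l + M) := by
          rw [one_div]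
          have h := Real.rpow_lt_rpow ht0.le hta (by positivity : (0:ℝ) < p⁻¹)
          rwa [Real.rpow_rpow_inv ha0 hp0'] at h
        have hK := abs_le.mp (key x t ht0)
        have hT0 : 0 ≤ t ^ (1 / p) := Real.rpow_nonneg ht0.le _
        have hsplit : t ^ (1 + 1 / p) = t * t ^ (1 / p) := by
          rw [Real.rpow_add ht0, Real.rpow_one]
        rw [hsplit]
        have h5 : t ^ (1 / p) * (l + M) < |g x| := (lt_div_iff₀ hlMpos).mp htp
        nlinarith [mul_lt_mul_of_pos_right h5 ht0, hK.1]
      calc ENNReal.ofReal ((|g x| / (l + M)) ^ p)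
          = volume (Ioo 0 ((|g x| / (l + M)) ^ p)) := by rw [Real.volume_Ioo, sub_zero]
        _ ≤ _ := measure_mono hsub
    have heq : ENNReal.ofReal ((l / (l + M)) ^ p) * I =
        ENNReal.ofReal (l ^ p) * ∫⁻ x, ENNReal.ofReal ((|g x| / (l + M)) ^ p) := by
      rw [hcompute (l + M) hlMpos, ← mul_assoc, hmul l (l + M) (by linarith) hlMpos]
    rw [heq, hprod]
    exact mul_le_mul_right (lintegral_mono low_slice) _
  · -- upper bound
    filter_upwards [eventually_ge_atTop (max 1 (M + 1))] with l hl
    have hl1 : (1 : ℝ) ≤ l := le_trans (le_max_left _ _) hl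
    have hlM1 : M + 1 ≤ l := le_trans (le_max_right _ _) hl
    have hlMsub : 0 < l - M := by linarith
    have hprod := Measure.prod_apply (μ := volume) (ν := volume.restrict (Ioi (0:ℝ))) (hSm l)
    have high_slice : ∀ x,
        (volume.restrict (Ioi (0:ℝ)))
          (Prod.mk x ⁻¹' {q : ℝ × ℝ | 0 < q.2 ∧ l * q.2 ^ (1 + 1 / p) < |f (q.1 + q.2) - f q.1|})
          ≤ ENNReal.ofReal ((|g x| / (l - M)) ^ p) := by
      intro x
      rw [Measure.restrict_apply (measurable_prodMk_left (hSm l))]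
      have hsub :
          (Prod.mk x ⁻¹' {q : ℝ × ℝ | 0 < q.2 ∧ l * q.2 ^ (1 + 1 / p) < |f (q.1 + q.2) - f q.1|})
            ∩ Ioi 0 ⊆ Ioo 0 ((|g x| / (l - M)) ^ p) := by
        rintro t ⟨⟨ht0, hcond⟩, -⟩
        refine ⟨ht0, ?_⟩
        have hT0 : 0 ≤ t ^ (1 / p) := Real.rpow_nonneg ht0.le _
        have hsplit : t ^ (1 + 1 / p) = t * t ^ (1 / p) := by
          rw [Real.rpow_add ht0, Real.rpow_one]
        rw [show (Prod.mk x t).2 = t from rfl] at hcond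
        rw [hsplit] at hcond
        have hK := abs_le.mp (key x t ht0)
        have h6 : (l - M) * t ^ (1 / p) * t < |g x| * t := by nlinarith [hK.2]
        have h7 : (l - M) * t ^ (1 / p) < |g x| := (mul_lt_mul_iff_left₀ ht0).mp h6
        have h8 : t ^ (1 / p) < |g x| / (l - M) := by
          rw [lt_div_iff₀ hlMsub]
          linarith [h7]
        calc t = (t ^ (1 / p)) ^ p := by rw [one_div, Real.rpow_inv_rpow ht0.le hp0']
          _ < (|g x| / (l - M)) ^ p := Real.rpow_lt_rpow hT0 h8 hp0
      calc (volume ((Prod.mk x ⁻¹'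
              {q : ℝ × ℝ | 0 < q.2 ∧ l * q.2 ^ (1 + 1 / p) < |f (q.1 + q.2) - f q.1|}) ∩ Ioi 0))
          ≤ volume (Ioo 0 ((|g x| / (l - M)) ^ p)) := measure_mono hsub
        _ = ENNReal.ofReal ((|g x| / (l - M)) ^ p) := by rw [Real.volume_Ioo, sub_zero]
    have heq : ENNReal.ofReal ((l / (l - M)) ^ p) * I =
        ENNReal.ofReal (l ^ p) * ∫⁻ x, ENNReal.ofReal ((|g x| / (l - M)) ^ p) := by
      rw [hcompute (l - M) hlMsub, ← mul_assoc, hmul l (l - M) (by linarith) hlMsub]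
    rw [hprod, heq]
    exact mul_le_mul_right (lintegral_mono high_slice) _
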